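/- In the Soccer Ball Graph, every Identifying Code Set contains at least 4 vertices from the top half (layers L1–L3) and at least 4 vertices from the bottom half (layers L4–L6). -/

import Mathlib

/-- Vertices of the Soccer Ball Graph: 12 pentagonal vertices
(`P1`, `P3 j`, `P4 j`, `P6`) and 20 hexagonal vertices
(`H2 j`, `H3 j`, `H4 j`, `H5 j`), indices `j : Fin 5` taken cyclically. -/
inductive SBGVertex : Type
  | P1 : SBGVertex
  | P3 : Fin 5 → SBGVertex
  | P4 : Fin 5 → SBGVertex
  | P6 : SBGVertex
  | H2 : Fin 5 → SBGVertex
  | H3 : Fin 5 → SBGVertex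
  | H4 : Fin 5 → SBGVertex
  | H5 : Fin 5 → SBGVertex
  deriving DecidableEq, Fintype

open SBGVertex

/-- One direction of each of the 17 edge families E1–E17 (indices mod 5). -/
def sbgRel : SBGVertex → SBGVertex → Bool
  | P1, H2 _ => true                                -- E1
  | P6, H5 _ => true                                -- E2
  | H2 j, H2 k => k == j + 1                        -- E3 (i = 2)
  | H5 j, H5 k => k == j + 1                        -- E3 (i = 5)
  | H3 j, P3 k => k == j                            -- E4
  | P3 j, H3 k => k == j + 1                        -- E5
  | H4 j, P4 k => k == j + 1                        -- E6
  | P4 j, H4 k => k == j                            -- E7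
  | H2 j, H3 k => k == j                            -- E8
  | H2 j, P3 k => k == j - 1 || k == j              -- E9, E10
  | H3 j, P4 k => k == j                            -- E11
  | H3 j, H4 k => k == j - 1 || k == j              -- E12, E13
  | P3 j, H4 k => k == j                            -- E14
  | H4 j, H5 k => k == j                            -- E15
  | P4 j, H5 k => k == j - 1 || k == j              -- E16, E17
  | _, _ => false

/-- The Soccer Ball Graph. -/
def SBG : SimpleGraph SBGVertex where
  Adj v w := v ≠ w ∧ (sbgRel v w || sbgRel w v)
  symm := by
    constructor; intro v w h
    exact ⟨h.1.symm, by have := h.2; rwa [Bool.or_comm]⟩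
  loopless := by constructor; intro v h; exact h.1 rfl

instance : DecidableRel SBG.Adj := fun v w =>
  inferInstanceAs (Decidable (v ≠ w ∧ (sbgRel v w || sbgRel w v) = true))

/-- Closed neighborhood `N⁺(v)` of a vertex of the SBG. -/
def closedNbhd (v : SBGVertex) : Finset SBGVertex :=
  Finset.univ.filter fun u => u = v ∨ SBG.Adj v u

/-- `V'` is an Identifying Code Set of the SBG. -/
def IsICS (V' : Finset SBGVertex) : Prop :=
  ∀ v w : SBGVertex, v ≠ w → closedNbhd v ∩ V' ≠ closedNbhd w ∩ V'

/-- Membership in the top half (layers L1–L3) of the SBG. -/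
def inTopHalf : SBGVertex → Bool
  | P1 => true | H2 _ => true | H3 _ => true | P3 _ => true
  | _ => false

/-- The top half L1 ∪ L2 ∪ L3 of the SBG. -/
def topHalf : Finset SBGVertex := Finset.univ.filter fun v => inTopHalf v

/-- The bottom half L4 ∪ L5 ∪ L6 of the SBG. -/
def bottomHalf : Finset SBGVertex := Finset.univ.filter fun v => ¬ inTopHalf v

/-- Membership in layers L1 ∪ L2. -/
def inL12 : SBGVertex → Bool
  | P1 => true | H2 _ => true
  | _ => false

/-- Layers L1 ∪ L2 of the SBG. -/
def L12 : Finset SBGVertex := Finset.univ.filter fun v => inL12 v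


/-! ### Auxiliary machinery for the proof -/

/-- `x` is in the closed neighborhood of `v` (as a Bool). -/
def nb (v x : SBGVertex) : Bool := x == v || sbgRel v x || sbgRel x v

/-- Membership in layers L5 ∪ L6. -/
def inL56 : SBGVertex → Bool
  | P6 => true | H5 _ => true
  | _ => false

private lemma mem_closedNbhd : ∀ v x : SBGVertex, x ∈ closedNbhd v ↔ nb v x = true := by
  decide

private lemma top_of : ∀ v x : SBGVertex, inL12 v = true → nb v x = true → inTopHalf x = true := by
  decide

private lemma bot_of : ∀ v x : SBGVertex, inL56 v = true → nb v x = true → inTopHalf x = false := by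
  decide

/-- A list of all vertices. -/
def vList : List SBGVertex :=
  [P1, P6] ++ (List.finRange 5).flatMap fun j => [P3 j, P4 j, H2 j, H3 j, H4 j, H5 j]

private lemma mem_vList : ∀ x : SBGVertex, x ∈ vList := by decide

/-- All unordered pairs of distinct vertices in L1 ∪ L2. -/
def pairListTop : List (SBGVertex × SBGVertex) :=
  [(P1, H2 0), (P1, H2 1), (P1, H2 2), (P1, H2 3), (P1, H2 4),
   (H2 0, H2 1), (H2 0, H2 2), (H2 0, H2 3), (H2 0, H2 4),
   (H2 1, H2 2), (H2 1, H2 3), (H2 1, H2 4),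
   (H2 2, H2 3), (H2 2, H2 4), (H2 3, H2 4)]

/-- All unordered pairs of distinct vertices in L5 ∪ L6. -/
def pairListBot : List (SBGVertex × SBGVertex) :=
  [(P6, H5 0), (P6, H5 1), (P6, H5 2), (P6, H5 3), (P6, H5 4),
   (H5 0, H5 1), (H5 0, H5 2), (H5 0, H5 3), (H5 0, H5 4),
   (H5 1, H5 2), (H5 1, H5 3), (H5 1, H5 4),
   (H5 2, H5 3), (H5 2, H5 4), (H5 3, H5 4)]

private lemma pairTop_props :
    ∀ p ∈ pairListTop, inL12 p.1 = true ∧ inL12 p.2 = true ∧ p.1 ≠ p.2 := by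
  intro p hp
  fin_cases hp <;> exact ⟨rfl, rfl, by decide⟩

private lemma pairBot_props :
    ∀ p ∈ pairListBot, inL56 p.1 = true ∧ inL56 p.2 = true ∧ p.1 ≠ p.2 := by
  intro p hp
  fin_cases hp <;> exact ⟨rfl, rfl, by decide⟩

/-- The pair `p` of vertices is not separated by any of `a`, `b`, `c`. -/
def pred (a b c : SBGVertex) (p : SBGVertex × SBGVertex) : Bool :=
  (nb p.1 a == nb p.2 a) && (nb p.1 b == nb p.2 b) && (nb p.1 c == nb p.2 c)

def checkTop : Bool :=
  vList.all fun a => vList.all fun b => vList.all fun c => pairListTop.any (pred a b c)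

def checkBot : Bool :=
  vList.all fun a => vList.all fun b => vList.all fun c => pairListBot.any (pred a b c)

private lemma hCheckTop : checkTop = true := by rfl

private lemma hCheckBot : checkBot = true := by rfl

private lemma topKey (a b c : SBGVertex) :
    ∃ v w : SBGVertex, inL12 v = true ∧ inL12 w = true ∧ v ≠ w ∧
      nb v a = nb w a ∧ nb v b = nb w b ∧ nb v c = nb w c := by
  have h1 := List.all_eq_true.mp hCheckTop a (mem_vList a)
  have h2 := List.all_eq_true.mp h1 b (mem_vList b)
  have h3 := List.all_eq_true.mp h2 c (mem_vList c)
  obtain ⟨p, hp, hpred⟩ := List.any_eq_true.mp h3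
  simp only [pred, Bool.and_eq_true, beq_iff_eq] at hpred
  obtain ⟨q1, q2, q3⟩ := pairTop_props p hp
  exact ⟨p.1, p.2, q1, q2, q3, hpred.1.1, hpred.1.2, hpred.2⟩

private lemma botKey (a b c : SBGVertex) :
    ∃ v w : SBGVertex, inL56 v = true ∧ inL56 w = true ∧ v ≠ w ∧
      nb v a = nb w a ∧ nb v b = nb w b ∧ nb v c = nb w c := by
  have h1 := List.all_eq_true.mp hCheckBot a (mem_vList a)
  have h2 := List.all_eq_true.mp h1 b (mem_vList b)
  have h3 := List.all_eq_true.mp h2 c (mem_vList c)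
  obtain ⟨p, hp, hpred⟩ := List.any_eq_true.mp h3
  simp only [pred, Bool.and_eq_true, beq_iff_eq] at hpred
  obtain ⟨q1, q2, q3⟩ := pairBot_props p hp
  exact ⟨p.1, p.2, q1, q2, q3, hpred.1.1, hpred.1.2, hpred.2⟩

private lemma exists_three {T : Finset SBGVertex} (h : T.card ≤ 3) :
    ∃ a b c, T ⊆ {a, b, c} := by
  have hlen : T.toList.length ≤ 3 := by rw [Finset.length_toList]; exact h
  rcases e : T.toList with _ | ⟨a, _ | ⟨b, _ | ⟨c, _ | ⟨d, l⟩⟩⟩⟩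
  · refine ⟨P1, P1, P1, fun x hx => ?_⟩
    have hx' := Finset.mem_toList.mpr hx; rw [e] at hx'; simp at hx'
  · refine ⟨a, a, a, fun x hx => ?_⟩
    have hx' := Finset.mem_toList.mpr hx; rw [e] at hx'; simp at hx'
    simp [hx']
  · refine ⟨a, b, b, fun x hx => ?_⟩
    have hx' := Finset.mem_toList.mpr hx; rw [e] at hx'; simp at hx'
    rcases hx' with rfl | rfl <;> simp
  · refine ⟨a, b, c, fun x hx => ?_⟩
    have hx' := Finset.mem_toList.mpr hx; rw [e] at hx'; simp at hx'
    rcases hx' with rfl | rfl | rfl <;> simp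
  · rw [e] at hlen; simp at hlen; omega

private lemma code_sub_top {V' : Finset SBGVertex} {a b c : SBGVertex}
    (hsub : V' ∩ topHalf ⊆ {a, b, c}) {v w : SBGVertex}
    (hv : inL12 v = true) (hw : inL12 w = true)
    (ha : nb v a = nb w a) (hb : nb v b = nb w b) (hc : nb v c = nb w c) :
    closedNbhd v ∩ V' ⊆ closedNbhd w ∩ V' := by
  intro x hx
  rw [Finset.mem_inter] at hx ⊢
  obtain ⟨h1, h2⟩ := hx
  refine ⟨?_, h2⟩
  rw [mem_closedNbhd] at h1 ⊢
  have hxtop : x ∈ topHalf := by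
    simp only [topHalf, Finset.mem_filter, Finset.mem_univ, true_and]
    exact top_of v x hv h1
  have hxs : x ∈ ({a, b, c} : Finset SBGVertex) := hsub (Finset.mem_inter.mpr ⟨h2, hxtop⟩)
  simp only [Finset.mem_insert, Finset.mem_singleton] at hxs
  rcases hxs with rfl | rfl | rfl
  · rw [← ha]; exact h1
  · rw [← hb]; exact h1
  · rw [← hc]; exact h1

private lemma code_sub_bot {V' : Finset SBGVertex} {a b c : SBGVertex}
    (hsub : V' ∩ bottomHalf ⊆ {a, b, c}) {v w : SBGVertex}
    (hv : inL56 v = true) (hw : inL56 w = true)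
    (ha : nb v a = nb w a) (hb : nb v b = nb w b) (hc : nb v c = nb w c) :
    closedNbhd v ∩ V' ⊆ closedNbhd w ∩ V' := by
  intro x hx
  rw [Finset.mem_inter] at hx ⊢
  obtain ⟨h1, h2⟩ := hx
  refine ⟨?_, h2⟩
  rw [mem_closedNbhd] at h1 ⊢
  have hxbot : x ∈ bottomHalf := by
    simp only [bottomHalf, Finset.mem_filter, Finset.mem_univ, true_and]
    simp [bot_of v x hv h1]
  have hxs : x ∈ ({a, b, c} : Finset SBGVertex) := hsub (Finset.mem_inter.mpr ⟨h2, hxbot⟩)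
  simp only [Finset.mem_insert, Finset.mem_singleton] at hxs
  rcases hxs with rfl | rfl | rfl
  · rw [← ha]; exact h1
  · rw [← hb]; exact h1
  · rw [← hc]; exact h1

/-- Every ICS of the SBG contains at least 4 vertices from the top half
(layers L1–L3) and at least 4 vertices from the bottom half (layers L4–L6). -/
theorem sbg_ics_four_from_each_half (V' : Finset SBGVertex) (h : IsICS V') :
    4 ≤ (V' ∩ topHalf).card ∧ 4 ≤ (V' ∩ bottomHalf).card := by
  constructor
  · by_contra hc4
    push_neg at hc4
    obtain ⟨a, b, c, hsub⟩ := exists_three (Nat.lt_succ_iff.mp hc4)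
    obtain ⟨v, w, hv, hw, hne, ea, eb, ec⟩ := topKey a b c
    exact h v w hne (Finset.Subset.antisymm
      (code_sub_top hsub hv hw ea eb ec)
      (code_sub_top hsub hw hv ea.symm eb.symm ec.symm))
  · by_contra hc4
    push_neg at hc4
    obtain ⟨a, b, c, hsub⟩ := exists_three (Nat.lt_succ_iff.mp hc4)
    obtain ⟨v, w, hv, hw, hne, ea, eb, ec⟩ := botKey a b c
    exact h v w hne (Finset.Subset.antisymm
      (code_sub_bot hsub hv hw ea eb ec)
      (code_sub_bot hsub hw hv ea.symm eb.symm ec.symm))
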